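/- Let (X,d) be a metric space and let ν be a Borel measure on X whose support is all of X and which is finite on bounded sets, satisfying the Bishop–Gromov inequality with parameters (K,N), where K ≤ 0 and 1 < N < ∞. Let ε > 0, let 𝒩 be a maximal ε-separated net in X, and let G(𝒩) be the associated discretization graph. Then every vertex p ∈ 𝒩 has degree ρ(p) ≤ (∫₀^{9ε/2} S_K^N(t) dt) / (∫₀^{ε/2} S_K^N(t) dt) − 1; in particular G(𝒩) has bounded geometry. -/

import Mathlib

open MeasureTheory Metric

/-- The model volume density `S_K^N` for `K ≤ 0`, `1 < N < ∞`. -/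
noncomputable def SKN (K N t : ℝ) : ℝ :=
  if K = 0 then t ^ (N - 1)
  else Real.sinh (Real.sqrt (|K| / (N - 1)) * t) ^ (N - 1)

/-- A Borel measure `ν` of full support satisfies the Bishop–Gromov inequality with
parameters `(K, N)` if for every `x` the function
`r ↦ ν(B(x,r)) / ∫₀^r S_K^N(t) dt` is nonincreasing on `(0, ∞)`. -/
def BishopGromov {X : Type*} [MetricSpace X] [MeasurableSpace X]
    (ν : Measure X) (K N : ℝ) : Prop :=
  ∀ x : X, AntitoneOn
    (fun r => (ν (ball x r)).toReal / ∫ t in (0:ℝ)..r, SKN K N t) (Set.Ioi 0)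

/-- A subset `𝒩` of a metric space is `ε`-separated if distinct points of `𝒩` are at
distance at least `ε`. -/
def IsSeparated {X : Type*} [MetricSpace X] (𝒩 : Set X) (ε : ℝ) : Prop :=
  ∀ p ∈ 𝒩, ∀ q ∈ 𝒩, p ≠ q → ε ≤ dist p q

/-- A maximal `ε`-separated net: an `ε`-separated set maximal with respect to inclusion. -/
def IsMaximalNet {X : Type*} [MetricSpace X] (𝒩 : Set X) (ε : ℝ) : Prop :=
  IsSeparated 𝒩 ε ∧ ∀ M : Set X, 𝒩 ⊆ M → IsSeparated M ε → M = 𝒩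

/-- The discretization graph `G(𝒩)`: vertices are points of `𝒩`, and distinct `p, q`
are adjacent iff `B(p,ε) ∩ B(q,ε) ≠ ∅`, equivalently `dist p q < 2ε`. -/
def netGraph {X : Type*} [MetricSpace X] (𝒩 : Set X) (ε : ℝ) : SimpleGraph 𝒩 where
  Adj p q := p ≠ q ∧ dist (p : X) (q : X) < 2 * ε
  symm := by
    constructor
    intro p q h
    exact ⟨h.1.symm, by rw [dist_comm]; exact h.2⟩
  loopless := by
    constructor
    intro p h
    exact h.1 rfl

lemma SKN_pos (K N : ℝ) (hN : 1 < N) {t : ℝ} (ht : 0 < t) : 0 < SKN K N t := by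
  by_cases h : K = 0
  · simp only [SKN, if_pos h]
    exact Real.rpow_pos_of_pos ht _
  · simp only [SKN, if_neg h]
    apply Real.rpow_pos_of_pos
    apply Real.sinh_pos_iff.mpr
    exact mul_pos (Real.sqrt_pos.mpr (div_pos (abs_pos.mpr h) (by linarith))) ht

lemma SKN_cont (K N : ℝ) (hN : 1 < N) : Continuous (SKN K N) := by
  unfold SKN
  by_cases h : K = 0
  · simp only [if_pos h]
    exact continuous_id.rpow_const (fun x => Or.inr (by linarith))
  · simp only [if_neg h]
    exact (Real.continuous_sinh.comp (continuous_const.mul continuous_id)).rpow_const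
      (fun x => Or.inr (by linarith))

lemma integral_SKN_pos (K N : ℝ) (hN : 1 < N) (r : ℝ) (hr : 0 < r) :
    0 < ∫ t in (0:ℝ)..r, SKN K N t :=
  intervalIntegral.intervalIntegral_pos_of_pos_on
    ((SKN_cont K N hN).intervalIntegrable 0 r)
    (fun t ht => SKN_pos K N hN ht.1) hr

theorem stmt_7 {X : Type*} [MetricSpace X] [MeasurableSpace X] [BorelSpace X]
    (ν : Measure X)
    (hfull : ∀ x : X, ∀ r > (0:ℝ), 0 < ν (ball x r))
    (hbdd : ∀ s : Set X, Bornology.IsBounded s → ν s < ⊤)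
    (K N : ℝ) (hK : K ≤ 0) (hN : 1 < N)
    (hBG : BishopGromov ν K N)
    (ε : ℝ) (hε : 0 < ε) (𝒩 : Set X) (hnet : IsMaximalNet 𝒩 ε) :
    (∀ p : 𝒩, ((netGraph 𝒩 ε).neighborSet p).Finite ∧
      (((netGraph 𝒩 ε).neighborSet p).ncard : ℝ) ≤
        (∫ t in (0:ℝ)..(9 * ε / 2), SKN K N t) /
          (∫ t in (0:ℝ)..(ε / 2), SKN K N t) - 1) ∧
    ∃ ρ₀ : ℕ, ∀ p : 𝒩, ((netGraph 𝒩 ε).neighborSet p).ncard ≤ ρ₀ := by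
  obtain ⟨hsep, -⟩ := hnet
  set I₁ := ∫ t in (0:ℝ)..(ε / 2), SKN K N t with hI₁def
  set I₂ := ∫ t in (0:ℝ)..(9 * ε / 2), SKN K N t with hI₂def
  have hI₁ : 0 < I₁ := integral_SKN_pos K N hN _ (by linarith)
  have hI₂ : 0 < I₂ := integral_SKN_pos K N hN _ (by linarith)
  -- the window sets
  have key : ∀ p : X, ∀ F : Finset X,
      (∀ q ∈ F, q ∈ 𝒩 ∧ dist p q < 2 * ε) → (F.card : ℝ) ≤ I₂ / I₁ := by
    intro p F hF
    set V := (ν (ball p (5 * ε / 2))).toReal with hVdef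
    have hVpos : 0 < V :=
      ENNReal.toReal_pos (hfull p _ (by linarith)).ne' (hbdd _ isBounded_ball).ne
    have hlow : ∀ q ∈ F, V * (I₁ / I₂) ≤ (ν (ball q (ε / 2))).toReal := by
      intro q hq
      have hmono := hBG q (Set.mem_Ioi.mpr (by linarith : (0:ℝ) < ε / 2))
        (Set.mem_Ioi.mpr (by linarith : (0:ℝ) < 9 * ε / 2)) (by linarith)
      simp only at hmono
      rw [← hI₁def, ← hI₂def] at hmono
      have hsub : ball p (5 * ε / 2) ⊆ ball q (9 * ε / 2) :=
        ball_subset_ball' (by have := (hF q hq).2; linarith)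
      have hV9 : V ≤ (ν (ball q (9 * ε / 2))).toReal :=
        ENNReal.toReal_mono (hbdd _ isBounded_ball).ne (measure_mono hsub)
      have h2 : V / I₂ ≤ (ν (ball q (ε / 2))).toReal / I₁ :=
        le_trans (by gcongr) hmono
      calc V * (I₁ / I₂) = (V / I₂) * I₁ := by ring
        _ ≤ ((ν (ball q (ε / 2))).toReal / I₁) * I₁ :=
            mul_le_mul_of_nonneg_right h2 hI₁.le
        _ = (ν (ball q (ε / 2))).toReal := div_mul_cancel₀ _ hI₁.ne'
    have hdisj : (↑F : Set X).PairwiseDisjoint (fun q => ball q (ε / 2)) := by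
      intro a ha b hb hab
      have hd := hsep a (hF a ha).1 b (hF b hb).1 hab
      exact ball_disjoint_ball (by linarith)
    have hsum : ∑ q ∈ F, ν (ball q (ε / 2)) ≤ ν (ball p (5 * ε / 2)) := by
      rw [← measure_biUnion_finset hdisj (fun q _ => measurableSet_ball)]
      refine measure_mono (Set.iUnion₂_subset fun q hq => ball_subset_ball' ?_)
      have := (hF q hq).2
      rw [dist_comm]
      linarith
    have hsumR : ∑ q ∈ F, (ν (ball q (ε / 2))).toReal ≤ V := by
      rw [← ENNReal.toReal_sum (fun q _ => (hbdd _ isBounded_ball).ne)]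
      exact ENNReal.toReal_mono (hbdd _ isBounded_ball).ne hsum
    have hcard : (F.card : ℝ) * (V * (I₁ / I₂)) ≤ V :=
      calc (F.card : ℝ) * (V * (I₁ / I₂)) = ∑ _q ∈ F, (V * (I₁ / I₂)) := by
            rw [Finset.sum_const, nsmul_eq_mul]
        _ ≤ ∑ q ∈ F, (ν (ball q (ε / 2))).toReal := Finset.sum_le_sum hlow
        _ ≤ V := hsumR
    rw [le_div_iff₀ hI₁]
    have h3 : V * ((F.card : ℝ) * I₁) ≤ V * I₂ := by
      have : (F.card : ℝ) * (V * (I₁ / I₂)) * I₂ ≤ V * I₂ :=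
        mul_le_mul_of_nonneg_right hcard hI₂.le
      calc V * ((F.card : ℝ) * I₁) = (F.card : ℝ) * (V * (I₁ / I₂)) * I₂ := by
            field_simp
        _ ≤ V * I₂ := this
    exact (mul_le_mul_iff_right₀ hVpos).mp h3
  have hAfin : ∀ p : X, {q | q ∈ 𝒩 ∧ dist p q < 2 * ε}.Finite := by
    intro p
    by_contra h
    obtain ⟨F, hFsub, hFcard⟩ :=
      (Set.not_infinite.not_right.mpr h : Set.Infinite _).exists_subset_card_eq
        (⌊I₂ / I₁⌋₊ + 1)
    have hb := key p F (fun q hq => hFsub hq)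
    have := Nat.le_floor hb
    omega
  have first : ∀ p : 𝒩, ((netGraph 𝒩 ε).neighborSet p).Finite ∧
      (((netGraph 𝒩 ε).neighborSet p).ncard : ℝ) ≤ I₂ / I₁ - 1 := by
    intro p
    set A := {q | q ∈ 𝒩 ∧ dist (p : X) q < 2 * ε} with hAdef
    have hA : A.Finite := hAfin (p : X)
    have himg : Subtype.val '' ((netGraph 𝒩 ε).neighborSet p) = A \ {(p : X)} := by
      ext x
      simp only [netGraph, SimpleGraph.neighborSet, Set.mem_image, Set.mem_setOf_eq,
        Set.mem_diff, Set.mem_singleton_iff, hAdef]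
      constructor
      · rintro ⟨q, ⟨hne, hd⟩, rfl⟩
        exact ⟨⟨q.2, hd⟩, fun hxp => hne (Subtype.ext hxp).symm⟩
      · rintro ⟨⟨h𝒩, hd⟩, hne⟩
        exact ⟨⟨x, h𝒩⟩, ⟨fun hpq => hne (congrArg Subtype.val hpq).symm, hd⟩, rfl⟩
    have hfin : ((netGraph 𝒩 ε).neighborSet p).Finite :=
      Set.Finite.of_finite_image (himg ▸ hA.subset Set.diff_subset)
        Subtype.val_injective.injOn
    refine ⟨hfin, ?_⟩
    have hpA : (p : X) ∈ A := ⟨p.2, by simp only [dist_self]; positivity⟩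
    have hcardA : (A.ncard : ℝ) ≤ I₂ / I₁ := by
      have hb := key (p : X) hA.toFinset (fun q hq => hA.mem_toFinset.mp hq)
      rwa [Set.ncard_eq_toFinset_card A hA]
    have hone : 1 ≤ A.ncard := (Set.ncard_pos hA).mpr ⟨_, hpA⟩
    have hn : ((netGraph 𝒩 ε).neighborSet p).ncard = A.ncard - 1 := by
      rw [← Set.ncard_image_of_injective _ Subtype.val_injective, himg,
        Set.ncard_diff_singleton_of_mem hpA]
    have : (((netGraph 𝒩 ε).neighborSet p).ncard : ℝ) = (A.ncard : ℝ) - 1 := by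
      rw [hn, Nat.cast_sub hone, Nat.cast_one]
    linarith
  exact ⟨first, ⟨⌊I₂ / I₁ - 1⌋₊, fun p => Nat.le_floor (first p).2⟩⟩
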